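/- arXiv:1608.04235 — 4 statements merged into one kernel-verified Lean document; each statement's English description precedes it below -/
import Mathlib

section
/- (Smithson's Arzelà–Ascoli theorem for uniform convergence on compacta, Hausdorff-metric hyperspace form.) Let X be a locally compact Hausdorff topological space and Y a metric space. Let 𝔉 be a set of continuous functions X → NonemptyCompacts Y (continuous point-compact multifunctions). Then 𝔉 is relatively compact in the topology of uniform convergence on compacta, i.e., the closure of the image of 𝔉 in UniformOnFun X (NonemptyCompacts Y) {K | IsCompact K} is compact, if and only if both: (AAucc1) 𝔉 is pointwise relatively compact, and (AAucc2) 𝔉 is equicontinuous. -/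
open TopologicalSpace

open Set Filter Metric Topology UniformConvergence in
/-- The set of nonempty compact subsets of a compact set `C` is compact in the
Hausdorff metric hyperspace. -/
lemma aux_isCompact_setOf_subset {Y : Type*} [MetricSpace Y] {C : Set Y} (hC : IsCompact C) :
    IsCompact {t : NonemptyCompacts Y | (t : Set Y) ⊆ C} := by
  haveI : CompactSpace ↥C := isCompact_iff_compactSpace.mp hC
  set Φ : NonemptyCompacts ↥C → NonemptyCompacts Y := fun t =>
    ⟨⟨Subtype.val '' (t : Set ↥C), t.isCompact.image continuous_subtype_val⟩,
      t.nonempty.image _⟩ with hΦ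
  have hiso : Isometry Φ := by
    intro s t
    show EMetric.hausdorffEdist (Subtype.val '' (s : Set ↥C)) (Subtype.val '' (t : Set ↥C)) =
      EMetric.hausdorffEdist (s : Set ↥C) (t : Set ↥C)
    exact EMetric.hausdorffEdist_image isometry_subtype_coe
  have hrange : {t : NonemptyCompacts Y | (t : Set Y) ⊆ C} = Set.range Φ := by
    ext t
    constructor
    · intro ht
      have hcl : IsClosed ((Subtype.val : ↥C → Y) ⁻¹' (t : Set Y)) :=
        t.isCompact.isClosed.preimage continuous_subtype_val
      have hne : ((Subtype.val : ↥C → Y) ⁻¹' (t : Set Y)).Nonempty := by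
        obtain ⟨y, hy⟩ := t.nonempty
        exact ⟨⟨y, ht hy⟩, hy⟩
      refine ⟨⟨⟨_, hcl.isCompact⟩, hne⟩, ?_⟩
      have : Subtype.val '' ((Subtype.val : ↥C → Y) ⁻¹' (t : Set Y)) = (t : Set Y) := by
        rw [Set.image_preimage_eq_inter_range, Subtype.range_coe]
        exact Set.inter_eq_left.mpr ht
      exact NonemptyCompacts.ext this
    · rintro ⟨s, rfl⟩
      rintro y ⟨⟨y', hy'⟩, -, rfl⟩
      exact hy'
  rw [hrange]
  exact isCompact_range hiso.continuous

open Set Filter Metric Topology UniformConvergence in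
/-- The union of a compact family of nonempty compact sets is compact. -/
lemma aux_isCompact_biUnion {Y : Type*} [MetricSpace Y] {T : Set (NonemptyCompacts Y)}
    (hT : IsCompact T) : IsCompact (⋃ t ∈ T, (t : Set Y)) := by
  rw [isCompact_iff_isSeqCompact]
  intro y hy
  have hys : ∀ n, ∃ t ∈ T, y n ∈ (t : Set Y) := by
    intro n
    simpa using hy n
  choose s hsT hysn using hys
  obtain ⟨t, htT, φ, hφ, hst⟩ := hT.isSeqCompact hsT
  choose z hz hdz using fun n =>
    t.isCompact.exists_infDist_eq_dist t.nonempty (y (φ n))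
  obtain ⟨w, hw, ψ, hψ, hzw⟩ := t.isCompact.isSeqCompact hz
  refine ⟨w, Set.mem_biUnion htT hw, φ ∘ ψ, hφ.comp hψ, ?_⟩
  rw [tendsto_iff_dist_tendsto_zero]
  have hbound : ∀ n, dist ((y ∘ (φ ∘ ψ)) n) w ≤
      dist (s (φ (ψ n))) t + dist (z (ψ n)) w := by
    intro n
    have h1 : dist (y (φ (ψ n))) (z (ψ n)) ≤ dist (s (φ (ψ n))) t := by
      rw [← hdz (ψ n)]
      rw [NonemptyCompacts.dist_eq]
      exact Metric.infDist_le_hausdorffDist_of_mem (hysn (φ (ψ n)))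
        (Metric.hausdorffEdist_ne_top_of_nonempty_of_bounded
          (s (φ (ψ n))).nonempty t.nonempty
          (s (φ (ψ n))).isCompact.isBounded t.isCompact.isBounded)
    calc dist ((y ∘ (φ ∘ ψ)) n) w ≤ dist (y (φ (ψ n))) (z (ψ n)) + dist (z (ψ n)) w :=
          dist_triangle _ _ _
      _ ≤ dist (s (φ (ψ n))) t + dist (z (ψ n)) w := add_le_add_left h1 _
  have h2 : Filter.Tendsto (fun n => dist (s (φ (ψ n))) t + dist (z (ψ n)) w)
      Filter.atTop (nhds 0) := by
    have ha : Filter.Tendsto (fun n => dist (s (φ (ψ n))) t) Filter.atTop (nhds 0) := by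
      have := (tendsto_iff_dist_tendsto_zero.mp hst).comp hψ.tendsto_atTop
      exact this
    have hb : Filter.Tendsto (fun n => dist (z (ψ n)) w) Filter.atTop (nhds 0) :=
      tendsto_iff_dist_tendsto_zero.mp hzw
    simpa using ha.add hb
  exact squeeze_zero (fun n => dist_nonneg) hbound h2

open Set Filter Metric Topology UniformConvergence in
/-- Smithson's Arzelà–Ascoli theorem for uniform convergence on compacta,
Hausdorff-metric hyperspace form: a family `𝔉` of continuous point-compact multifunctions
from a locally compact Hausdorff space `X` to a metric space `Y` is relatively compact in the
topology of uniform convergence on compacta iff it is pointwise relatively compact and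
equicontinuous. -/
theorem arzelaAscoli_uniformOnCompacta
    {X : Type*} [TopologicalSpace X] [LocallyCompactSpace X] [T2Space X]
    {Y : Type*} [MetricSpace Y]
    (𝔉 : Set (X → NonemptyCompacts Y)) (hcont : ∀ f ∈ 𝔉, Continuous f) :
    IsCompact (closure
        ((UniformOnFun.ofFun {K : Set X | IsCompact K}) '' 𝔉 :
          Set (UniformOnFun X (NonemptyCompacts Y) {K : Set X | IsCompact K}))) ↔
      (∀ x : X, IsCompact (closure (⋃ f ∈ 𝔉, (f x : Set Y)))) ∧
        Equicontinuous (fun f : 𝔉 => (f : X → NonemptyCompacts Y)) := by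
  set 𝔖 : Set (Set X) := {K : Set X | IsCompact K} with h𝔖
  constructor
  · intro h
    constructor
    · -- pointwise relative compactness
      intro x
      have hev : UniformContinuous
          (fun f : UniformOnFun X (NonemptyCompacts Y) 𝔖 => UniformOnFun.toFun 𝔖 f x) :=
        UniformOnFun.uniformContinuous_eval_of_mem _ _ (Set.mem_singleton x) isCompact_singleton
      have hT : IsCompact
          ((fun f : UniformOnFun X (NonemptyCompacts Y) 𝔖 => UniformOnFun.toFun 𝔖 f x) ''
            closure (UniformOnFun.ofFun 𝔖 '' 𝔉)) :=
        h.image hev.continuous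
      have hU := aux_isCompact_biUnion hT
      refine hU.of_isClosed_subset isClosed_closure (closure_minimal ?_ hU.isClosed)
      intro y hy
      obtain ⟨f, hf, hyf⟩ := by simpa using hy
      exact Set.mem_iUnion₂.mpr ⟨f x,
        ⟨UniformOnFun.ofFun 𝔖 f, subset_closure (Set.mem_image_of_mem _ hf), rfl⟩, hyf⟩
    · -- equicontinuity
      intro x0
      rw [Metric.equicontinuousAt_iff_right]
      intro ε hε
      obtain ⟨K, hKc, hKx⟩ := exists_compact_mem_nhds x0
      have hV : UniformOnFun.gen 𝔖 K
          {p : NonemptyCompacts Y × NonemptyCompacts Y | dist p.1 p.2 < ε / 3} ∈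
            uniformity (UniformOnFun X (NonemptyCompacts Y) 𝔖) :=
        UniformOnFun.gen_mem_uniformity _ _ hKc (Metric.dist_mem_uniformity (by positivity))
      have htb : TotallyBounded ((UniformOnFun.ofFun 𝔖 '' 𝔉 :
          Set (UniformOnFun X (NonemptyCompacts Y) 𝔖))) :=
        h.totallyBounded.subset subset_closure
      obtain ⟨t, hts, htf, hcov⟩ := totallyBounded_iff_subset.mp htb _ hV
      have hW : (interior K ∩ ⋂ g ∈ t,
          {x : X | dist (UniformOnFun.toFun 𝔖 g x) (UniformOnFun.toFun 𝔖 g x0) < ε / 3}) ∈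
            nhds x0 := by
        refine Filter.inter_mem (interior_mem_nhds.mpr hKx) ((Filter.biInter_mem htf).mpr ?_)
        intro g hg
        obtain ⟨g0, hg0, rfl⟩ := hts hg
        have hc : ContinuousAt g0 x0 := (hcont g0 hg0).continuousAt
        have : {x : X | dist (g0 x) (g0 x0) < ε / 3} ∈ nhds x0 := by
          have := hc.preimage_mem_nhds (Metric.ball_mem_nhds (g0 x0) (show (0:ℝ) < ε/3 by positivity))
          simpa [Metric.ball, Set.preimage] using this
        simpa using this
      filter_upwards [hW] with x hx
      intro f
      have hfs : UniformOnFun.ofFun 𝔖 (f : X → NonemptyCompacts Y) ∈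
          (UniformOnFun.ofFun 𝔖 '' 𝔉 : Set (UniformOnFun X (NonemptyCompacts Y) 𝔖)) :=
        Set.mem_image_of_mem _ f.2
      obtain ⟨g, hg, hfg⟩ := by simpa using hcov hfs
      have hx0K : x0 ∈ K := mem_of_mem_nhds hKx
      have hxK : x ∈ K := interior_subset hx.1
      have h1 : dist ((f : X → NonemptyCompacts Y) x0) (UniformOnFun.toFun 𝔖 g x0) < ε / 3 :=
        hfg x0 hx0K
      have h2 : dist (UniformOnFun.toFun 𝔖 g x0) (UniformOnFun.toFun 𝔖 g x) < ε / 3 := by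
        have := Set.mem_iInter₂.mp hx.2 g hg
        simpa [dist_comm] using this
      have h3 : dist (UniformOnFun.toFun 𝔖 g x) ((f : X → NonemptyCompacts Y) x) < ε / 3 := by
        have := hfg x hxK
        simpa [dist_comm] using this
      calc dist ((f : X → NonemptyCompacts Y) x0) ((f : X → NonemptyCompacts Y) x) ≤
            dist ((f : X → NonemptyCompacts Y) x0) (UniformOnFun.toFun 𝔖 g x0) +
            dist (UniformOnFun.toFun 𝔖 g x0) (UniformOnFun.toFun 𝔖 g x) +
            dist (UniformOnFun.toFun 𝔖 g x) ((f : X → NonemptyCompacts Y) x) :=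
          dist_triangle4 _ _ _ _
        _ < ε / 3 + ε / 3 + ε / 3 := by gcongr
        _ = ε := by ring
  · rintro ⟨hpc, heq⟩
    refine ArzelaAscoli.isCompact_closure_of_isClosedEmbedding (F := UniformOnFun.toFun 𝔖)
      (fun K hK => hK) ?_ ?_ ?_
    · exact IsClosedEmbedding.id
    · -- equicontinuity on each K
      intro K hK
      have : (UniformOnFun.toFun 𝔖 ∘
          ((↑) : (UniformOnFun.ofFun 𝔖 '' 𝔉 :
            Set (UniformOnFun X (NonemptyCompacts Y) 𝔖)) →
              UniformOnFun X (NonemptyCompacts Y) 𝔖)) =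
          (fun f : 𝔉 => (f : X → NonemptyCompacts Y)) ∘
            (fun i => (⟨UniformOnFun.toFun 𝔖 i.1, by
              obtain ⟨f, hf, hfeq⟩ := i.2
              rw [← hfeq]; exact hf⟩ : 𝔉)) := rfl
      rw [this]
      exact (heq.comp _).equicontinuousOn K
    · -- pointwise compactness
      intro K hK x hx
      refine ⟨{s : NonemptyCompacts Y | (s : Set Y) ⊆ closure (⋃ f ∈ 𝔉, (f x : Set Y))},
        aux_isCompact_setOf_subset (hpc x), ?_⟩
      rintro i ⟨f, hf, rfl⟩
      intro y hy
      exact subset_closure (Set.mem_biUnion hf hy)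
end

section
/- (Arzelà–Ascoli theorem for uniform convergence, Hausdorff-metric hyperspace form; main theorem.) Let X be a locally compact Hausdorff topological space and Y a metric space. Let 𝔉 be a set of continuous functions X → NonemptyCompacts Y (continuous point-compact multifunctions). Then 𝔉 is relatively compact in the topology of uniform convergence, i.e., the closure of the image of 𝔉 in UniformFun X (NonemptyCompacts Y) is compact, if and only if both: (AA1) 𝔉 is pointwise relatively compact and equicontinuous, and (AA2) 𝔉 satisfies the finite extension property. -/
open TopologicalSpace

section Helpers

open Metric EMetric Set Filter

variable {Y : Type*} [MetricSpace Y]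

/-- The set of nonempty compact subsets contained in a fixed compact set is compact in the
Hausdorff metric. -/
lemma AA.isCompact_setOf_subset {C : Set Y} (hC : IsCompact C) :
    IsCompact {K : NonemptyCompacts Y | (K : Set Y) ⊆ C} := by
  have : CompactSpace C := isCompact_iff_compactSpace.mp hC
  set e : NonemptyCompacts C → NonemptyCompacts Y := fun K =>
    ⟨⟨Subtype.val '' (K : Set C), K.isCompact.image continuous_subtype_val⟩,
      K.nonempty.image _⟩ with he
  have hiso : Isometry e := by
    intro K L
    show EMetric.hausdorffEdist (Subtype.val '' (K : Set C)) (Subtype.val '' (L : Set C))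
        = EMetric.hausdorffEdist (K : Set C) (L : Set C)
    exact EMetric.hausdorffEdist_image isometry_subtype_coe
  have hrange : range e = {K : NonemptyCompacts Y | (K : Set Y) ⊆ C} := by
    ext K
    constructor
    · rintro ⟨L, rfl⟩
      exact image_subset_iff.mpr fun x _ => x.2
    · intro hK
      have hne : (Subtype.val ⁻¹' (K : Set Y) : Set C).Nonempty := by
        obtain ⟨y, hy⟩ := K.nonempty
        exact ⟨⟨y, hK hy⟩, hy⟩
      have hcl : IsClosed (Subtype.val ⁻¹' (K : Set Y) : Set C) :=
        K.isCompact.isClosed.preimage continuous_subtype_val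
      refine ⟨⟨⟨_, hcl.isCompact⟩, hne⟩, ?_⟩
      apply NonemptyCompacts.ext
      simp only [he]
      exact (Subtype.image_preimage_coe _ _).trans (inter_eq_self_of_subset_right hK)
  rw [← hrange]
  exact isCompact_range hiso.continuous

/-- If a family of nonempty compacts is uniformly contained in a compact set, its closure in the
Hausdorff metric is compact. -/
lemma AA.isCompact_closure_hyper {S : Set (NonemptyCompacts Y)} {C : Set Y} (hC : IsCompact C)
    (h : ∀ K ∈ S, (K : Set Y) ⊆ C) : IsCompact (closure S) :=
  (AA.isCompact_setOf_subset hC).of_isClosed_subset isClosed_closure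
    (closure_minimal h (AA.isCompact_setOf_subset hC).isClosed)

/-- The union of a compact family of nonempty compact sets is compact. -/
lemma AA.isCompact_biUnion {S : Set (NonemptyCompacts Y)} (hS : IsCompact S) :
    IsCompact (⋃ K ∈ S, (K : Set Y)) := by
  rw [isCompact_iff_ultrafilter_le_nhds]
  intro 𝒰 h𝒰
  rw [le_principal_iff] at h𝒰
  rcases S.eq_empty_or_nonempty with rfl | ⟨K₀', hK₀'⟩
  · simp at h𝒰
  classical
  set U : Set Y := ⋃ K ∈ S, (K : Set Y) with hU
  have hgex : ∀ y ∈ U, ∃ K ∈ S, y ∈ (K : Set Y) := fun y hy => by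
    simpa using mem_iUnion₂.mp hy
  set g : Y → NonemptyCompacts Y := fun y =>
    if h : y ∈ U then (hgex y h).choose else K₀' with hg
  have hgS : ∀ y ∈ U, g y ∈ S := by
    intro y hy; simp only [hg, dif_pos hy]; exact (hgex y hy).choose_spec.1
  have hgy : ∀ y ∈ U, y ∈ (g y : Set Y) := by
    intro y hy; simp only [hg, dif_pos hy]; exact (hgex y hy).choose_spec.2
  have hmapS : ↑(𝒰.map g) ≤ Filter.principal S := by
    rw [le_principal_iff]
    exact Filter.mem_map.mpr (Filter.mem_of_superset h𝒰 hgS)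
  obtain ⟨K₀, hK₀S, hK₀⟩ := hS.ultrafilter_le_nhds _ hmapS
  suffices h : ∃ z ∈ (K₀ : Set Y), ↑𝒰 ≤ nhds z by
    obtain ⟨z, hz, hle⟩ := h
    exact ⟨z, mem_biUnion hK₀S hz, hle⟩
  by_contra hcon
  push_neg at hcon
  have hV : ∀ z ∈ (K₀ : Set Y), ∃ V : Set Y, IsOpen V ∧ z ∈ V ∧ Vᶜ ∈ 𝒰 := by
    intro z hz
    have h1 := hcon z hz
    rw [Filter.le_def] at h1
    push_neg at h1
    obtain ⟨V, hV1, hV2⟩ := h1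
    refine ⟨interior V, isOpen_interior, mem_interior_iff_mem_nhds.mpr hV1, ?_⟩
    rw [Ultrafilter.compl_mem_iff_notMem]
    exact fun h => hV2 (𝒰.mem_of_superset h interior_subset)
  choose! V hVopen hVmem hVcompl using hV
  obtain ⟨t, htK₀, hcover⟩ := K₀.isCompact.elim_nhds_subcover V
    (fun z hz => (hVopen z hz).mem_nhds (hVmem z hz))
  set W : Set Y := ⋃ z ∈ t, V z with hW
  have hWopen : IsOpen W := isOpen_biUnion fun z hz => hVopen z (htK₀ z hz)
  obtain ⟨δ, hδpos, hδ⟩ := K₀.isCompact.exists_thickening_subset_open hWopen hcover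
  have hball : EMetric.ball K₀ (ENNReal.ofReal δ) ∈ Filter.map g ↑𝒰 :=
    hK₀ (EMetric.ball_mem_nhds _ (by simpa using hδpos))
  have hthick : Metric.thickening δ (K₀ : Set Y) ∈ 𝒰 := by
    refine 𝒰.mem_of_superset (Filter.inter_mem h𝒰 (Filter.mem_map.mp hball)) ?_
    rintro y ⟨hyU, hyb⟩
    rw [Metric.mem_thickening_iff_infEdist_lt]
    calc EMetric.infEdist y (K₀ : Set Y)
        ≤ EMetric.hausdorffEdist ((g y : Set Y)) (K₀ : Set Y) :=
          EMetric.infEdist_le_hausdorffEdist_of_mem (hgy y hyU)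
      _ < ENNReal.ofReal δ := hyb
  have hWmem : W ∈ 𝒰 := 𝒰.mem_of_superset hthick hδ
  have hWc : Wᶜ ∈ 𝒰 := by
    rw [hW, Set.compl_iUnion₂]
    exact (Filter.biInter_finset_mem t).mpr fun z hz => hVcompl z (htK₀ z hz)
  exact (Ultrafilter.compl_mem_iff_notMem.mp hWc) hWmem

end Helpers

/-- A family `𝔉` of point-compact multifunctions (functions into `NonemptyCompacts Y`) has the
finite extension property if for every `ε > 0` there are a finite set `D ⊆ X` and `δ > 0` such
that any two members of `𝔉` that are `δ`-close (in Hausdorff distance) on `D` are `ε`-close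
everywhere. -/
def FiniteExtensionProperty {X Y : Type*} [MetricSpace Y]
    (𝔉 : Set (X → NonemptyCompacts Y)) : Prop :=
  ∀ ε > (0 : ℝ), ∃ D : Set X, D.Finite ∧ ∃ δ > (0 : ℝ),
    ∀ f ∈ 𝔉, ∀ g ∈ 𝔉, (∀ x ∈ D, dist (f x) (g x) < δ) → ∀ x : X, dist (f x) (g x) < ε

/-- Arzelà–Ascoli theorem for uniform convergence, Hausdorff-metric hyperspace
form: a family `𝔉` of continuous point-compact multifunctions from a locally compact
Hausdorff space `X` to a metric space `Y` is relatively compact in the topology of uniform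
convergence iff it is pointwise relatively compact, equicontinuous, and satisfies the finite
extension property. -/
theorem arzelaAscoli_uniformConvergence
    {X : Type*} [TopologicalSpace X] [LocallyCompactSpace X] [T2Space X]
    {Y : Type*} [MetricSpace Y]
    (𝔉 : Set (X → NonemptyCompacts Y)) (hcont : ∀ f ∈ 𝔉, Continuous f) :
    IsCompact (closure
        (UniformFun.ofFun '' 𝔉 : Set (UniformFun X (NonemptyCompacts Y)))) ↔
      ((∀ x : X, IsCompact (closure (⋃ f ∈ 𝔉, (f x : Set Y)))) ∧
          Equicontinuous (fun f : 𝔉 => (f : X → NonemptyCompacts Y))) ∧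
        FiniteExtensionProperty 𝔉 := by
  classical
  set 𝔉' : Set (UniformFun X (NonemptyCompacts Y)) := UniformFun.ofFun '' 𝔉 with h𝔉'
  have hbasis : (uniformity (UniformFun X (NonemptyCompacts Y))).HasBasis (fun ε : ℝ => 0 < ε)
      (fun ε => UniformFun.gen X (NonemptyCompacts Y) {p : NonemptyCompacts Y × NonemptyCompacts Y | dist p.1 p.2 < ε}) :=
    UniformFun.hasBasis_uniformity_of_basis X (NonemptyCompacts Y) Metric.uniformity_basis_dist
  -- membership translation
  have hmem𝔉' : ∀ f ∈ 𝔉, UniformFun.ofFun f ∈ 𝔉' := fun f hf => Set.mem_image_of_mem _ hf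
  constructor
  · -- forward direction
    intro hcpt
    have hTB : TotallyBounded 𝔉' := hcpt.totallyBounded.subset subset_closure
    -- finite nets inside 𝔉
    have hnet : ∀ ε > (0 : ℝ), ∃ t : Set (X → NonemptyCompacts Y), t ⊆ 𝔉 ∧ t.Finite ∧
        ∀ f ∈ 𝔉, ∃ g ∈ t, ∀ x, dist (f x) (g x) < ε := by
      intro ε hε
      obtain ⟨t', ht'sub, ht'fin, hcov⟩ := totallyBounded_iff_subset.mp hTB
        (UniformFun.gen X (NonemptyCompacts Y) {p : NonemptyCompacts Y × NonemptyCompacts Y | dist p.1 p.2 < ε}) (hbasis.mem_of_mem hε)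
      refine ⟨UniformFun.toFun '' t', ?_, ht'fin.image _, ?_⟩
      · rintro g ⟨g', hg', rfl⟩
        obtain ⟨f, hf, rfl⟩ := ht'sub hg'
        simpa using hf
      · intro f hf
        obtain ⟨g', hg't', hfg'⟩ := Set.mem_iUnion₂.mp (hcov (hmem𝔉' f hf))
        exact ⟨UniformFun.toFun g', Set.mem_image_of_mem _ hg't', fun x => hfg' x⟩
    refine ⟨⟨?_, ?_⟩, ?_⟩
    · -- pointwise relative compactness
      intro x
      have hev : Continuous (Function.eval x ∘ UniformFun.toFun : UniformFun X (NonemptyCompacts Y) → NonemptyCompacts Y) :=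
        (UniformFun.uniformContinuous_eval (NonemptyCompacts Y) x).continuous
      have h1 : IsCompact ((Function.eval x ∘ UniformFun.toFun) '' closure 𝔉') :=
        hcpt.image hev
      have h2 : IsCompact (closure ((Function.eval x ∘ UniformFun.toFun) '' 𝔉')) :=
        h1.of_isClosed_subset isClosed_closure
          (closure_minimal (Set.image_mono subset_closure) h1.isClosed)
      have h3 : IsCompact (⋃ K ∈ closure ((Function.eval x ∘ UniformFun.toFun) '' 𝔉'),
          (K : Set Y)) := AA.isCompact_biUnion h2
      refine h3.of_isClosed_subset isClosed_closure (closure_minimal ?_ h3.isClosed)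
      refine Set.iUnion₂_subset fun f hf => ?_
      intro y hy
      exact Set.mem_biUnion (subset_closure ⟨UniformFun.ofFun f, hmem𝔉' f hf, rfl⟩) hy
    · -- equicontinuity
      intro x₀
      rw [Metric.equicontinuousAt_iff_right]
      intro ε hε
      obtain ⟨t, hts, htfin, hcov⟩ := hnet (ε / 3) (by linarith)
      have hU : ∀ᶠ y in nhds x₀, ∀ g ∈ t, dist (g x₀) (g y) < ε / 3 := by
        rw [Filter.eventually_all_finite htfin]
        intro g hg
        have hgc : Continuous g := hcont g (hts hg)
        have htend : Filter.Tendsto (fun y => dist (g x₀) (g y)) (nhds x₀) (nhds 0) := by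
          have hc : Continuous (fun y => dist (g x₀) (g y)) :=
            Continuous.dist continuous_const hgc
          simpa using hc.tendsto x₀
        have := htend.eventually_lt_const (by linarith : (0:ℝ) < ε / 3)
        exact this
      filter_upwards [hU] with y hy f
      obtain ⟨g, hgt, hg⟩ := hcov f.1 f.2
      calc dist (f.1 x₀) (f.1 y)
          ≤ dist (f.1 x₀) (g x₀) + dist (g x₀) (g y) + dist (g y) (f.1 y) :=
            dist_triangle4 _ _ _ _
        _ < ε / 3 + ε / 3 + ε / 3 := by
            have h1 := hg x₀
            have h2 := hy g hgt
            have h3 := hg y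
            rw [dist_comm] at h3
            exact add_lt_add (add_lt_add h1 h2) h3
        _ = ε := by ring
    · -- FEP
      intro ε hε
      obtain ⟨t, hts, htfin, hcov⟩ := hnet (ε / 6) (by linarith)
      set w : (X → NonemptyCompacts Y) → (X → NonemptyCompacts Y) → Set X := fun g g' =>
        if h : ∃ x, 3 * (ε / 6) < dist (g x) (g' x) then {h.choose} else ∅ with hw
      set D : Set X := ⋃ g ∈ t, ⋃ g' ∈ t, w g g' with hD
      have hDfin : D.Finite := htfin.biUnion (fun g _ => htfin.biUnion (fun g' _ => by
        by_cases h : ∃ x, 3 * (ε / 6) < dist (g x) (g' x) <;> simp [hw, h]))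
      refine ⟨D, hDfin, ε / 6, by linarith, ?_⟩
      intro f hf g hg hclose x
      obtain ⟨f₁, hf₁t, hf₁⟩ := hcov f hf
      obtain ⟨g₁, hg₁t, hg₁⟩ := hcov g hg
      have hkey : ∀ y, dist (f₁ y) (g₁ y) ≤ 3 * (ε / 6) := by
        by_contra hcon
        push_neg at hcon
        obtain ⟨y, hy⟩ := hcon
        have hex : ∃ x, 3 * (ε / 6) < dist (f₁ x) (g₁ x) := ⟨y, hy⟩
        have hxD : hex.choose ∈ D := by
          rw [hD]
          refine Set.mem_biUnion hf₁t (Set.mem_biUnion hg₁t ?_)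
          simp only [hw, dif_pos hex]
          exact Set.mem_singleton _
        have hspec := hex.choose_spec
        set x₀ := hex.choose
        have h1 := hf₁ x₀
        have h2 := hclose x₀ hxD
        have h3 := hg₁ x₀
        have h4 : dist (f₁ x₀) (g₁ x₀) ≤
            dist (f₁ x₀) (f x₀) + dist (f x₀) (g x₀) + dist (g x₀) (g₁ x₀) :=
          dist_triangle4 _ _ _ _
        rw [dist_comm] at h1
        linarith
      have h5 : dist (f x) (g x) ≤
          dist (f x) (f₁ x) + dist (f₁ x) (g₁ x) + dist (g₁ x) (g x) := dist_triangle4 _ _ _ _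
      have h6 := hkey x
      have h7 := hf₁ x
      have h8 := hg₁ x
      rw [dist_comm] at h8
      linarith
  · -- backward direction
    rintro ⟨⟨hpt, _⟩, hFEP⟩
    rw [isCompact_iff_totallyBounded_isComplete]
    constructor
    · -- totally bounded
      refine TotallyBounded.closure ?_
      rw [hbasis.totallyBounded_iff]
      intro ε hε
      obtain ⟨D, hDfin, δ, hδpos, hδ⟩ := hFEP ε hε
      haveI : Fintype D := hDfin.fintype
      set T : D → Set (NonemptyCompacts Y) := fun x =>
        {K : NonemptyCompacts Y | (K : Set Y) ⊆ closure (⋃ f ∈ 𝔉, (f x.1 : Set Y))} with hT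
      have hTcpt : ∀ x : D, IsCompact (T x) := fun x => AA.isCompact_setOf_subset (hpt x.1)
      set Φ : UniformFun X (NonemptyCompacts Y) → (D → NonemptyCompacts Y) :=
        fun F x => UniformFun.toFun F x.1 with hΦ
      have hsub : Φ '' 𝔉' ⊆ Set.pi Set.univ T := by
        rintro _ ⟨F, ⟨f, hf, rfl⟩, rfl⟩ x _
        exact fun y hy => subset_closure (Set.mem_biUnion hf hy)
      have hTBpi : TotallyBounded (Φ '' 𝔉') :=
        ((isCompact_univ_pi hTcpt).totallyBounded).subset hsub
      obtain ⟨s, hssub, hsfin, hscov⟩ := totallyBounded_iff_subset.mp hTBpi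
        {p | dist p.1 p.2 < δ} (Metric.dist_mem_uniformity hδpos)
      haveI : Fintype s := hsfin.fintype
      have hpre : ∀ y : s, ∃ F, F ∈ 𝔉' ∧ Φ F = (y : ↥D → NonemptyCompacts Y) := fun y => by
        obtain ⟨F, hF, hFy⟩ := hssub y.2; exact ⟨F, hF, hFy⟩
      choose pre hpre1 hpre2 using hpre
      refine ⟨Set.range pre, Set.finite_range _, ?_⟩
      intro G hG
      obtain ⟨y, hys, hy⟩ := Set.mem_iUnion₂.mp (hscov (Set.mem_image_of_mem Φ hG))
      refine Set.mem_biUnion (Set.mem_range_self (⟨y, hys⟩ : s)) ?_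
      obtain ⟨g, hg𝔉, rfl⟩ := hG
      intro x
      show dist (g x) (UniformFun.toFun (pre ⟨y, hys⟩) x) < ε
      have hgen : UniformFun.toFun (pre ⟨y, hys⟩) ∈ 𝔉 := by
        obtain ⟨f', hf', hf'e⟩ := hpre1 ⟨y, hys⟩
        rw [← hf'e]
        simpa using hf'
      refine hδ g hg𝔉 _ hgen ?_ x
      intro a ha
      have h1 : dist (Φ (UniformFun.ofFun g)) (Φ (pre ⟨y, hys⟩)) < δ := by
        rw [hpre2]; exact hy
      have h2 := (dist_pi_lt_iff hδpos).mp h1 ⟨a, ha⟩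
      exact h2
    · -- complete
      intro ℓ hℓ hℓle
      haveI : ℓ.NeBot := hℓ.1
      have hQ : ∀ x : X,
          IsCompact (closure ((Function.eval x ∘ UniformFun.toFun) '' 𝔉')) := by
        intro x
        refine AA.isCompact_closure_hyper (hpt x) ?_
        rintro K ⟨F, ⟨f, hf, rfl⟩, rfl⟩
        exact fun y hy => subset_closure (Set.mem_biUnion hf hy)
      have hev : ∀ x : X, ∃ z ∈ closure ((Function.eval x ∘ UniformFun.toFun) '' 𝔉'),
          Filter.map (Function.eval x ∘ UniformFun.toFun) ℓ ≤ nhds z := by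
        intro x
        refine (hQ x).isComplete _
          (hℓ.map (UniformFun.uniformContinuous_eval (NonemptyCompacts Y) x)) ?_
        rw [Filter.le_principal_iff, Filter.mem_map]
        refine Filter.mem_of_superset (Filter.le_principal_iff.mp hℓle) ?_
        intro F hF
        exact image_closure_subset_closure_image
          (UniformFun.uniformContinuous_eval (NonemptyCompacts Y) x).continuous
          ⟨F, hF, rfl⟩
      choose z hzmem hz using hev
      have hlim : ℓ ≤ nhds (UniformFun.ofFun z) := by
        rw [(UniformFun.hasBasis_nhds_of_basis X (NonemptyCompacts Y) (UniformFun.ofFun z)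
          Metric.uniformity_basis_dist).ge_iff]
        intro ε hε
        obtain ⟨A, hAℓ, hA⟩ := (cauchy_iff.mp hℓ).2
          (UniformFun.gen X (NonemptyCompacts Y)
            {p : NonemptyCompacts Y × NonemptyCompacts Y | dist p.1 p.2 < ε / 3})
          (hbasis.mem_of_mem (by linarith))
        refine Filter.mem_of_superset hAℓ (fun g hg => ?_)
        intro x
        show dist (z x) (UniformFun.toFun g x) < ε
        have h1 : z x ∈ closure ((Function.eval x ∘ UniformFun.toFun) '' A) :=
          mem_closure_of_tendsto (hz x)
            (Filter.eventually_of_mem hAℓ (fun F hF => Set.mem_image_of_mem _ hF))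
        obtain ⟨w, ⟨F, hFA, rfl⟩, hwd'⟩ := Metric.mem_closure_iff.mp h1 (ε / 3) (by linarith)
        have hwd : dist (z x) (UniformFun.toFun F x) < ε / 3 := hwd'
        have h2 : dist (UniformFun.toFun F x) (UniformFun.toFun g x) < ε / 3 :=
          hA (Set.mk_mem_prod hFA hg) x
        calc dist (z x) (UniformFun.toFun g x)
            ≤ dist (z x) (UniformFun.toFun F x)
              + dist (UniformFun.toFun F x) (UniformFun.toFun g x) := dist_triangle _ _ _
          _ < ε := by linarith
      refine ⟨UniformFun.ofFun z, ?_, hlim⟩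
      have := mem_closure_of_tendsto (f := fun F : UniformFun X (NonemptyCompacts Y) => F)
        (hlim : Filter.Tendsto _ ℓ _) (Filter.eventually_of_mem
          (Filter.le_principal_iff.mp hℓle) (fun F hF => hF))
      rwa [closure_closure] at this
end

section
/- Let X be a locally compact Hausdorff topological space and Y a metric space. Let 𝔉 be a set of continuous functions X → NonemptyCompacts Y that is pointwise relatively compact and equicontinuous. Then the following are equivalent: (C1) 𝔉 is relatively compact in the topology of uniform convergence, i.e., the closure of the image of 𝔉 in UniformFun X (NonemptyCompacts Y) is compact; (C2) 𝔉 satisfies the finite extension property; (C3) 𝔉 satisfies the compact extension property. -/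
open TopologicalSpace

/-- Compact extension property. -/
def CompactExtensionProperty {X Y : Type*} [TopologicalSpace X] [MetricSpace Y]
    (𝔉 : Set (X → NonemptyCompacts Y)) : Prop :=
  ∀ ε > (0 : ℝ), ∃ K : Set X, IsCompact K ∧ ∃ δ > (0 : ℝ),
    ∀ f ∈ 𝔉, ∀ g ∈ 𝔉, (∀ x ∈ K, dist (f x) (g x) < δ) → ∀ x : X, dist (f x) (g x) < ε

open Metric Set Filter
open scoped Uniformity Topology

lemma aux_isCompact_nonemptyCompacts {Y : Type*} [MetricSpace Y] {C : Set Y} (hC : IsCompact C) :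
    IsCompact {K : NonemptyCompacts Y | (K : Set Y) ⊆ C} := by
  rcases C.eq_empty_or_nonempty with rfl | hne
  · convert isCompact_empty
    ext K
    simp [Set.subset_empty_iff, K.nonempty.ne_empty]
  · haveI : CompactSpace C := isCompact_iff_compactSpace.mp hC
    let e : NonemptyCompacts C → NonemptyCompacts Y := fun K =>
      ⟨⟨Subtype.val '' (K : Set C), K.isCompact.image continuous_subtype_val⟩, K.nonempty.image _⟩
    have he : Isometry e := by
      intro K L
      show EMetric.hausdorffEdist (Subtype.val '' (K : Set C)) (Subtype.val '' (L : Set C)) =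
        EMetric.hausdorffEdist (K : Set C) (L : Set C)
      exact EMetric.hausdorffEdist_image isometry_subtype_coe
    have : {K : NonemptyCompacts Y | (K : Set Y) ⊆ C} = Set.range e := by
      ext K
      constructor
      · intro hK
        have hKC : IsCompact (Subtype.val ⁻¹' (K : Set Y) : Set C) :=
          (K.isCompact.isClosed.preimage continuous_subtype_val).isCompact
        have hKne : (Subtype.val ⁻¹' (K : Set Y) : Set C).Nonempty := by
          obtain ⟨y, hy⟩ := K.nonempty
          exact ⟨⟨y, hK hy⟩, hy⟩
        refine ⟨⟨⟨Subtype.val ⁻¹' (K : Set Y), hKC⟩, hKne⟩, ?_⟩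
        ext y
        simp only [e]
        constructor
        · rintro ⟨⟨z, hz⟩, hzz, rfl⟩; exact hzz
        · intro hy; exact ⟨⟨y, hK hy⟩, hy, rfl⟩
      · rintro ⟨L, rfl⟩
        rintro y ⟨⟨z, hz⟩, -, rfl⟩
        exact hz
    rw [this]
    exact isCompact_range he.continuous

lemma aux_uof_closure_compact
    {X : Type*} [TopologicalSpace X]
    {Y : Type*} [MetricSpace Y]
    (𝔉 : Set (X → NonemptyCompacts Y))
    (hptwise : ∀ x : X, IsCompact (closure (⋃ f ∈ 𝔉, (f x : Set Y))))
    (hequi : Equicontinuous (fun f : 𝔉 => (f : X → NonemptyCompacts Y))) :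
    IsCompact (closure (UniformOnFun.ofFun {K : Set X | IsCompact K} '' 𝔉 :
      Set (UniformOnFun X (NonemptyCompacts Y) {K : Set X | IsCompact K}))) := by
  set 𝔖 : Set (Set X) := {K : Set X | IsCompact K}
  refine ArzelaAscoli.isCompact_closure_of_isClosedEmbedding (𝔖 := 𝔖)
    (F := UniformOnFun.toFun 𝔖) (fun K hK => hK) ?_ ?_ ?_
  · exact (Topology.IsClosedEmbedding.id : Topology.IsClosedEmbedding (id : UniformOnFun X (NonemptyCompacts Y) 𝔖 → _))
  · -- equicontinuity of the family indexed by the image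
    intro K hK
    intro x hx U hU
    have := hequi x U hU
    rw [Filter.eventually_iff] at this ⊢
    refine mem_nhdsWithin_of_mem_nhds (Filter.mem_of_superset this ?_)
    intro y hy
    rintro ⟨g, hg⟩
    obtain ⟨f, hf, rfl⟩ := hg
    exact hy ⟨f, hf⟩
  · intro K hK x hx
    refine ⟨{L : NonemptyCompacts Y | (L : Set Y) ⊆ closure (⋃ f ∈ 𝔉, (f x : Set Y))},
      aux_isCompact_nonemptyCompacts (hptwise x), ?_⟩
    rintro g ⟨f, hf, rfl⟩
    show (f x : Set Y) ⊆ closure (⋃ f ∈ 𝔉, (f x : Set Y))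
    exact (Set.subset_biUnion_of_mem (u := fun f : X → NonemptyCompacts Y => (f x : Set Y)) hf).trans subset_closure

lemma aux_one_two {X : Type*} {Y : Type*} [MetricSpace Y]
    (𝔉 : Set (X → NonemptyCompacts Y))
    (h1 : IsCompact (closure
        (UniformFun.ofFun '' 𝔉 : Set (UniformFun X (NonemptyCompacts Y))))) :
    FiniteExtensionProperty 𝔉 := by
  rcases isEmpty_or_nonempty X with hX | hX
  · intro ε hε
    exact ⟨∅, Set.finite_empty, 1, one_pos, fun f _ g _ _ x => (IsEmpty.false x).elim⟩
  intro ε hε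
  have htb : TotallyBounded (UniformFun.ofFun '' 𝔉 : Set (UniformFun X (NonemptyCompacts Y))) :=
    h1.totallyBounded.subset subset_closure
  set α := NonemptyCompacts Y
  have hV : {p : α × α | dist p.1 p.2 < ε/8} ∈ 𝓤 α := dist_mem_uniformity (by linarith)
  have hW : UniformFun.gen X α {p : α × α | dist p.1 p.2 < ε/8} ∈ 𝓤 (UniformFun X α) :=
    (UniformFun.hasBasis_uniformity X α).mem_of_mem hV
  obtain ⟨t, hts, htfin, htcover⟩ := (totallyBounded_iff_subset.mp htb) _ hW
  classical
  -- witnesses for far-apart pairs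
  let P : UniformFun X α → UniformFun X α → Prop :=
    fun u v => ∃ x : X, ε/2 < dist (UniformFun.toFun u x) (UniformFun.toFun v x)
  let w : UniformFun X α → UniformFun X α → X :=
    fun u v => if h : P u v then h.choose else Classical.arbitrary X
  refine ⟨Set.image2 w t t, htfin.image2 _ htfin, ε/8, by linarith, ?_⟩
  intro f hf g hg hclose x
  obtain ⟨u, hu, hfu⟩ : ∃ u ∈ t, ∀ y : X, dist (f y) (UniformFun.toFun u y) < ε/8 := by
    have := htcover (Set.mem_image_of_mem _ hf)
    rw [Set.mem_iUnion₂] at this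
    obtain ⟨u, hu, hfu⟩ := this
    exact ⟨u, hu, fun y => hfu y⟩
  obtain ⟨v, hv, hgv⟩ : ∃ v ∈ t, ∀ y : X, dist (g y) (UniformFun.toFun v y) < ε/8 := by
    have := htcover (Set.mem_image_of_mem _ hg)
    rw [Set.mem_iUnion₂] at this
    obtain ⟨v, hv, hgv⟩ := this
    exact ⟨v, hv, fun y => hgv y⟩
  have hPuv : ¬ P u v := by
    intro hP
    have hx0 : ε/2 < dist (UniformFun.toFun u (w u v)) (UniformFun.toFun v (w u v)) := by
      simpa only [w, dif_pos hP] using hP.choose_spec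
    have hmem : w u v ∈ Set.image2 w t t := Set.mem_image2_of_mem hu hv
    have h1' := hfu (w u v)
    have h2' := hgv (w u v)
    have h3' := hclose _ hmem
    have : dist (UniformFun.toFun u (w u v)) (UniformFun.toFun v (w u v)) ≤
        dist (UniformFun.toFun u (w u v)) (f (w u v)) + dist (f (w u v)) (g (w u v)) +
        dist (g (w u v)) (UniformFun.toFun v (w u v)) := dist_triangle4 _ _ _ _
    have e1 : dist (UniformFun.toFun u (w u v)) (f (w u v)) =
        dist (f (w u v)) (UniformFun.toFun u (w u v)) := dist_comm _ _
    have e2 : dist (g (w u v)) (UniformFun.toFun v (w u v)) =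
        dist (g (w u v)) (UniformFun.toFun v (w u v)) := rfl
    linarith
  have huv : dist (UniformFun.toFun u x) (UniformFun.toFun v x) ≤ ε/2 := by
    by_contra hc
    exact hPuv ⟨x, by linarith⟩
  have : dist (f x) (g x) ≤ dist (f x) (UniformFun.toFun u x) +
      dist (UniformFun.toFun u x) (UniformFun.toFun v x) +
      dist (UniformFun.toFun v x) (g x) := dist_triangle4 _ _ _ _
  have h1' := hfu x
  have h2' := hgv x
  have e1 : dist (UniformFun.toFun v x) (g x) = dist (g x) (UniformFun.toFun v x) := dist_comm _ _
  linarith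

lemma aux_three_one {X : Type*} [TopologicalSpace X] {Y : Type*} [MetricSpace Y]
    (𝔉 : Set (X → NonemptyCompacts Y))
    (hptwise : ∀ x : X, IsCompact (closure (⋃ f ∈ 𝔉, (f x : Set Y))))
    (hequi : Equicontinuous (fun f : 𝔉 => (f : X → NonemptyCompacts Y)))
    (h3 : CompactExtensionProperty 𝔉) :
    IsCompact (closure
        (UniformFun.ofFun '' 𝔉 : Set (UniformFun X (NonemptyCompacts Y)))) := by
  set 𝔖 : Set (Set X) := {K : Set X | IsCompact K} with h𝔖
  have hT : IsCompact (closure (UniformOnFun.ofFun 𝔖 '' 𝔉 : Set (UniformOnFun X (NonemptyCompacts Y) 𝔖))) :=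
    aux_uof_closure_compact 𝔉 hptwise hequi
  set T : Set (UniformOnFun X (NonemptyCompacts Y) 𝔖) := closure (UniformOnFun.ofFun 𝔖 '' 𝔉) with hTdef
  -- extended compact extension property on the closure T
  have hext : ∀ ε > (0:ℝ), ∃ K ∈ 𝔖, ∃ δ > (0:ℝ), ∀ f ∈ T, ∀ g ∈ T,
      (∀ x ∈ K, dist (UniformOnFun.toFun 𝔖 f x) (UniformOnFun.toFun 𝔖 g x) < δ) →
      ∀ x : X, dist (UniformOnFun.toFun 𝔖 f x) (UniformOnFun.toFun 𝔖 g x) ≤ ε := by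
    intro ε hε
    obtain ⟨K, hK, δ, hδ, hKδ⟩ := h3 ε hε
    refine ⟨K, hK, δ/2, by linarith, ?_⟩
    intro f hf g hg hfg x
    refine le_of_forall_pos_le_add ?_
    intro η hη
    set r := min (δ/4) (η/2) with hr
    have hr0 : 0 < r := lt_min (by linarith) (by linarith)
    have hrδ : r ≤ δ/4 := min_le_left _ _
    have hrη : r ≤ η/2 := min_le_right _ _
    have hKx : K ∪ {x} ∈ 𝔖 := hK.union isCompact_singleton
    have hVr : {p : (NonemptyCompacts Y) × (NonemptyCompacts Y) | dist p.1 p.2 < r} ∈ 𝓤 (NonemptyCompacts Y) := dist_mem_uniformity hr0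
    obtain ⟨f', hf'N, hf'img⟩ :=
      mem_closure_iff_nhds.mp hf _ (UniformOnFun.gen_mem_nhds (NonemptyCompacts Y) 𝔖 f hKx hVr)
    obtain ⟨f0, hf0, rfl⟩ := hf'img
    obtain ⟨g', hg'N, hg'img⟩ :=
      mem_closure_iff_nhds.mp hg _ (UniformOnFun.gen_mem_nhds (NonemptyCompacts Y) 𝔖 g hKx hVr)
    obtain ⟨g0, hg0, rfl⟩ := hg'img
    have hxmem : x ∈ K ∪ {x} := Set.mem_union_right _ rfl
    have hfg0 : ∀ y ∈ K, dist (f0 y) (g0 y) < δ := by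
      intro y hy
      have h1 := hf'N y (Set.mem_union_left _ hy)
      have h2 := hg'N y (Set.mem_union_left _ hy)
      have h3' := hfg y hy
      have htr : dist (f0 y) (g0 y) ≤
          dist (f0 y) (UniformOnFun.toFun 𝔖 f y) + dist (UniformOnFun.toFun 𝔖 f y)
            (UniformOnFun.toFun 𝔖 g y) + dist (UniformOnFun.toFun 𝔖 g y) (g0 y) :=
        dist_triangle4 _ _ _ _
      have e1 : dist (f0 y) (UniformOnFun.toFun 𝔖 f y) =
          dist (UniformOnFun.toFun 𝔖 f y) (f0 y) := dist_comm _ _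
      have e2 : dist (UniformOnFun.toFun 𝔖 g y) (g0 y) =
          dist (g0 y) (UniformOnFun.toFun 𝔖 g y) := dist_comm _ _
      have h1' : dist (UniformOnFun.toFun 𝔖 f y) (f0 y) < r := h1
      have h2' : dist (UniformOnFun.toFun 𝔖 g y) (g0 y) < r := h2
      linarith
    have hfar := hKδ f0 hf0 g0 hg0 hfg0 x
    have h1 : dist (UniformOnFun.toFun 𝔖 f x) (f0 x) < r := hf'N x hxmem
    have h2 : dist (UniformOnFun.toFun 𝔖 g x) (g0 x) < r := hg'N x hxmem
    have htr : dist (UniformOnFun.toFun 𝔖 f x) (UniformOnFun.toFun 𝔖 g x) ≤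
        dist (UniformOnFun.toFun 𝔖 f x) (f0 x) + dist (f0 x) (g0 x) +
        dist (g0 x) (UniformOnFun.toFun 𝔖 g x) := dist_triangle4 _ _ _ _
    have e2 : dist (g0 x) (UniformOnFun.toFun 𝔖 g x) =
        dist (UniformOnFun.toFun 𝔖 g x) (g0 x) := dist_comm _ _
    linarith
  -- the identity map from T (with topology of compact convergence) to UniformFun is continuous
  let φ : T → UniformFun X (NonemptyCompacts Y) := fun f => UniformFun.ofFun (UniformOnFun.toFun 𝔖 f.1)
  have hφ : Continuous φ := by
    rw [continuous_iff_continuousAt]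
    intro f0
    rw [ContinuousAt,
      (UniformFun.hasBasis_nhds_of_basis X (NonemptyCompacts Y) _ Metric.uniformity_basis_dist).tendsto_right_iff]
    intro ε hε
    obtain ⟨K, hK, δ, hδ, hKδ⟩ := hext (ε/2) (by linarith)
    have hV : {p : (NonemptyCompacts Y) × (NonemptyCompacts Y) | dist p.1 p.2 < δ} ∈ 𝓤 (NonemptyCompacts Y) := dist_mem_uniformity hδ
    have hU := UniformOnFun.gen_mem_nhds (NonemptyCompacts Y) 𝔖 (f0 : UniformOnFun X (NonemptyCompacts Y) 𝔖) hK hV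
    have hU' : Subtype.val ⁻¹'
        {g | ∀ x ∈ K, (UniformOnFun.toFun 𝔖 (f0 : UniformOnFun X (NonemptyCompacts Y) 𝔖) x,
          UniformOnFun.toFun 𝔖 g x) ∈ {p : (NonemptyCompacts Y) × (NonemptyCompacts Y) | dist p.1 p.2 < δ}} ∈ 𝓝 f0 :=
      continuous_subtype_val.continuousAt.preimage_mem_nhds hU
    filter_upwards [hU'] with h hh
    intro x
    have hle := hKδ f0.1 f0.2 h.1 h.2 (fun y hy => hh y hy) x
    show dist (UniformOnFun.toFun 𝔖 f0.1 x) (UniformOnFun.toFun 𝔖 h.1 x) < ε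
    linarith
  haveI : CompactSpace T := isCompact_iff_compactSpace.mp hT
  have hrange : IsCompact (Set.range φ) := isCompact_range hφ
  refine IsCompact.of_isClosed_subset hrange isClosed_closure
    (closure_minimal ?_ hrange.isClosed)
  rintro g ⟨f, hf, rfl⟩
  exact ⟨⟨UniformOnFun.ofFun 𝔖 f, subset_closure (Set.mem_image_of_mem _ hf)⟩, rfl⟩

/-- for a pointwise relatively compact and equicontinuous family `𝔉` of continuous
point-compact multifunctions on a locally compact Hausdorff space, relative compactness in the
topology of uniform convergence, the finite extension property and the compact extension
property are all equivalent. -/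
theorem extensionProperties_tfae
    {X : Type*} [TopologicalSpace X] [LocallyCompactSpace X] [T2Space X]
    {Y : Type*} [MetricSpace Y]
    (𝔉 : Set (X → NonemptyCompacts Y)) (hcont : ∀ f ∈ 𝔉, Continuous f)
    (hptwise : ∀ x : X, IsCompact (closure (⋃ f ∈ 𝔉, (f x : Set Y))))
    (hequi : Equicontinuous (fun f : 𝔉 => (f : X → NonemptyCompacts Y))) :
    List.TFAE
      [IsCompact (closure
          (UniformFun.ofFun '' 𝔉 : Set (UniformFun X (NonemptyCompacts Y)))),
        FiniteExtensionProperty 𝔉,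
        CompactExtensionProperty 𝔉] := by
  tfae_have 1 → 2
  | h1 => aux_one_two 𝔉 h1
  tfae_have 2 → 3
  | h2 => by
    intro ε hε
    obtain ⟨D, hD, δ, hδ, hDδ⟩ := h2 ε hε
    exact ⟨D, hD.isCompact, δ, hδ, hDδ⟩
  tfae_have 3 → 1
  | h3 => aux_three_one 𝔉 hptwise hequi h3
  tfae_finish
end

section
/- Let X be a type, Y a metric space, and 𝔉 a set of functions X → NonemptyCompacts Y satisfying the finite extension property. Then on 𝔉 the topology of pointwise convergence coincides with the topology of uniform convergence: the topology induced on the subtype 𝔉 by the product (pointwise convergence) topology on X → NonemptyCompacts Y equals the topology induced on 𝔉 by UniformFun X (NonemptyCompacts Y). -/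
open TopologicalSpace

/-- if `𝔉` satisfies the finite extension property, then on `𝔉` the topology of
pointwise convergence coincides with the topology of uniform convergence. -/
theorem fep_pointwise_eq_uniform
    {X : Type*} {Y : Type*} [MetricSpace Y]
    (𝔉 : Set (X → NonemptyCompacts Y)) (hfep : FiniteExtensionProperty 𝔉) :
    TopologicalSpace.induced (fun f : 𝔉 => (f : X → NonemptyCompacts Y))
        (Pi.topologicalSpace) =
      TopologicalSpace.induced (fun f : 𝔉 => UniformFun.ofFun (f : X → NonemptyCompacts Y))
        (inferInstance : TopologicalSpace (UniformFun X (NonemptyCompacts Y))) := by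
  refine le_antisymm ?_ ?_
  · -- pointwise ≤ uniform (hard direction, uses FEP)
    rw [le_iff_nhds]
    intro f
    rw [nhds_induced, nhds_induced]
    intro S hS
    rw [Filter.mem_comap] at hS ⊢
    obtain ⟨T, hT, hTS⟩ := hS
    -- get ε-ball inside T
    obtain ⟨V, hV, hVT⟩ :=
      ((UniformFun.hasBasis_nhds X (NonemptyCompacts Y)
        (UniformFun.ofFun (f : X → NonemptyCompacts Y))).mem_iff).mp hT
    obtain ⟨ε, hε, hεV⟩ := Metric.mem_uniformity_dist.mp hV
    obtain ⟨D, hD, δ, hδ, hkey⟩ := hfep ε hε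
    refine ⟨⋂ x ∈ D, {g : X → NonemptyCompacts Y | dist ((f : X → NonemptyCompacts Y) x) (g x) < δ}, ?_, ?_⟩
    · -- this set is a nhd of f in the product topology
      refine (Filter.biInter_mem hD).mpr ?_
      intro x _
      have hopen : IsOpen {g : X → NonemptyCompacts Y |
          dist ((f : X → NonemptyCompacts Y) x) (g x) < δ} := by
        have heq : {g : X → NonemptyCompacts Y |
            dist ((f : X → NonemptyCompacts Y) x) (g x) < δ} =
            (fun g : X → NonemptyCompacts Y => g x) ⁻¹'
              (Metric.ball ((f : X → NonemptyCompacts Y) x) δ) := by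
          ext g; simp [Metric.mem_ball, dist_comm]
        rw [heq]
        exact Metric.isOpen_ball.preimage (continuous_apply x)
      exact hopen.mem_nhds (by simpa using hδ)
    · intro g hg
      apply hTS
      apply hVT
      intro x
      apply hεV
      exact hkey f f.2 g g.2 (fun x hx => by
        have := Set.mem_iInter₂.mp hg x hx; exact this) x
  · -- uniform ≤ pointwise: uniform topology is finer than pointwise
    have hcont : Continuous (UniformFun.toFun :
        UniformFun X (NonemptyCompacts Y) → X → NonemptyCompacts Y) :=
      UniformFun.uniformContinuous_toFun.continuous
    calc TopologicalSpace.induced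
          (fun f : 𝔉 => UniformFun.ofFun (f : X → NonemptyCompacts Y))
          (inferInstance : TopologicalSpace (UniformFun X (NonemptyCompacts Y)))
        ≤ TopologicalSpace.induced
          (fun f : 𝔉 => UniformFun.ofFun (f : X → NonemptyCompacts Y))
          (TopologicalSpace.induced UniformFun.toFun Pi.topologicalSpace) := by
          exact induced_mono (continuous_iff_le_induced.mp hcont)
      _ = TopologicalSpace.induced (fun f : 𝔉 => (f : X → NonemptyCompacts Y))
          Pi.topologicalSpace := by
          rw [induced_compose]
          rfl
end
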